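/- For n hyperplanes in absolute general position in ℝˡ, the number of k-dimensional faces of the induced stratification is f_k = Σ_{j=0}^{k} C(n, l−j) · C(l−j, l−k). -/

import Mathlib

open scoped Classical

/-- The dimension of a subset of `ℝˡ`: the rank of the direction of its affine span. -/
noncomputable def setDim (l : ℕ) (F : Set (Fin l → ℝ)) : ℕ :=
  Module.finrank ℝ (affineSpan ℝ F).direction

/-- The face of the arrangement `A` containing the point `x`: the connected component of
`x` in (the intersection of the hyperplanes through `x`) minus (the union of the
hyperplanes missing `x`). -/
def arrFace (l : ℕ) (A : Finset (Set (Fin l → ℝ))) (x : Fin l → ℝ) : Set (Fin l → ℝ) :=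
  connectedComponentIn
    (⋂₀ {H | H ∈ A ∧ x ∈ H} \ ⋃₀ {H | H ∈ A ∧ x ∉ H}) x


namespace FaceCount

variable {l : ℕ}

/-- `H` is (contained in the class of) affine hyperplane-like sets. -/
def IsHyp (H : Set (Fin l → ℝ)) : Prop :=
  ∃ f : (Fin l → ℝ) →ₗ[ℝ] ℝ, ∃ c : ℝ, H = {x | f x = c}

noncomputable def fv (H : Set (Fin l → ℝ)) : (Fin l → ℝ) →ₗ[ℝ] ℝ :=
  if h : IsHyp H then h.choose else 0

noncomputable def cv (H : Set (Fin l → ℝ)) : ℝ :=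
  if h : IsHyp H then h.choose_spec.choose else 0

lemma mem_hyp_iff {H : Set (Fin l → ℝ)} (h : IsHyp H) (x : Fin l → ℝ) :
    x ∈ H ↔ fv H x = cv H := by
  rw [fv, cv, dif_pos h, dif_pos h]
  conv_lhs => rw [h.choose_spec.choose_spec]
  rfl

/-- One of the two open sides of the hyperplane `H`, selected by the proposition `b`. -/
noncomputable def side (H : Set (Fin l → ℝ)) (b : Prop) : Set (Fin l → ℝ) :=
  if b then {x | cv H < fv H x} else {x | fv H x < cv H}

lemma mem_side_pos {H : Set (Fin l → ℝ)} {b : Prop} (hb : b) {x : Fin l → ℝ} :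
    x ∈ side H b ↔ cv H < fv H x := by rw [side, if_pos hb]; rfl

lemma mem_side_neg {H : Set (Fin l → ℝ)} {b : Prop} (hb : ¬ b) {x : Fin l → ℝ} :
    x ∈ side H b ↔ fv H x < cv H := by rw [side, if_neg hb]; rfl

lemma isOpen_side (H : Set (Fin l → ℝ)) (b : Prop) : IsOpen (side H b) := by
  have hc : Continuous (fv H) := (fv H).continuous_of_finiteDimensional
  rw [side]; split
  · exact isOpen_lt continuous_const hc
  · exact isOpen_lt hc continuous_const

lemma convex_side (H : Set (Fin l → ℝ)) (b : Prop) : Convex ℝ (side H b) := by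
  rw [side]; split
  · exact convex_halfSpace_gt (LinearMap.isLinear _) _
  · exact convex_halfSpace_lt (LinearMap.isLinear _) _

lemma not_mem_of_mem_side {H : Set (Fin l → ℝ)} (h : IsHyp H) {b : Prop} {x : Fin l → ℝ}
    (hx : x ∈ side H b) : x ∉ H := by
  rw [mem_hyp_iff h]
  rw [side] at hx
  split at hx <;> exact fun e => absurd e (by simp only [Set.mem_setOf_eq] at hx; intro; linarith)

lemma side_cases {H : Set (Fin l → ℝ)} (h : IsHyp H) {x : Fin l → ℝ} (hx : x ∉ H) (b : Prop) :
    x ∈ side H b ∨ x ∈ side H (¬ b) := by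
  rw [mem_hyp_iff h] at hx
  by_cases hb : b
  · rcases lt_or_gt_of_ne hx with h1 | h1
    · exact Or.inr ((mem_side_neg (by simpa using hb)).2 h1)
    · exact Or.inl ((mem_side_pos hb).2 h1)
  · rcases lt_or_gt_of_ne hx with h1 | h1
    · exact Or.inl ((mem_side_neg hb).2 h1)
    · exact Or.inr ((mem_side_pos (by simpa using hb)).2 h1)

lemma side_disjoint {H : Set (Fin l → ℝ)} {b : Prop} {x : Fin l → ℝ}
    (h1 : x ∈ side H b) (h2 : x ∈ side H (¬ b)) : False := by
  by_cases hb : b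
  · rw [mem_side_pos hb] at h1
    rw [mem_side_neg (by simpa using hb)] at h2
    linarith
  · rw [mem_side_neg hb] at h1
    rw [mem_side_pos (by simpa using hb)] at h2
    linarith

/-- The open region with prescribed sides (positive on `P`) of the hyperplanes in `B`. -/
noncomputable def Reg (B P : Finset (Set (Fin l → ℝ))) : Set (Fin l → ℝ) :=
  ⋂ H ∈ B, side H (H ∈ P)

lemma mem_Reg {B P : Finset (Set (Fin l → ℝ))} {x : Fin l → ℝ} :
    x ∈ Reg B P ↔ ∀ H ∈ B, x ∈ side H (H ∈ P) := by
  simp [Reg]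

lemma isOpen_Reg (B P : Finset (Set (Fin l → ℝ))) : IsOpen (Reg B P) :=
  isOpen_biInter_finset fun H _ => isOpen_side H _

lemma convex_Reg (B P : Finset (Set (Fin l → ℝ))) : Convex ℝ (Reg B P) := by
  refine convex_iInter fun H => convex_iInter fun _ => convex_side H _

/-- The affine subspace cut out by the (chosen) equations of the sets in `Z`. -/
noncomputable def interAff (Z : Finset (Set (Fin l → ℝ))) : AffineSubspace ℝ (Fin l → ℝ) where
  carrier := {x | ∀ H ∈ Z, fv H x = cv H}
  smul_vsub_vadd_mem' := by
    intro t p1 p2 p3 h1 h2 h3 H hH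
    have e1 := h1 H hH; have e2 := h2 H hH; have e3 := h3 H hH
    simp only [vadd_eq_add, vsub_eq_sub, map_add, map_smul, map_sub, smul_eq_mul]
    rw [e1, e2, e3]; ring

lemma mem_interAff {Z : Finset (Set (Fin l → ℝ))} {x : Fin l → ℝ} :
    x ∈ interAff Z ↔ ∀ H ∈ Z, fv H x = cv H := Iff.rfl

lemma coe_interAff (Z : Finset (Set (Fin l → ℝ))) (hZ : ∀ H ∈ Z, IsHyp H) :
    (interAff Z : Set (Fin l → ℝ)) = ⋂₀ ↑Z := by
  ext x
  simp only [SetLike.mem_coe, mem_interAff, Set.mem_sInter, Finset.mem_coe]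
  exact ⟨fun h H hH => (mem_hyp_iff (hZ H hH) x).2 (h H hH),
    fun h H hH => (mem_hyp_iff (hZ H hH) x).1 (h H hH)⟩

end FaceCount

namespace FaceCount

variable {l : ℕ}

lemma setDim_coe (L : AffineSubspace ℝ (Fin l → ℝ)) :
    setDim l (L : Set (Fin l → ℝ)) = Module.finrank ℝ L.direction := by
  rw [setDim, AffineSubspace.affineSpan_coe]

/-- An open neighborhood trick: a relatively open nonempty subset of an affine subspace
has the same affine span direction as the subspace. -/
lemma direction_affineSpan_inter_open (L : AffineSubspace ℝ (Fin l → ℝ))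
    {O : Set (Fin l → ℝ)} (hO : IsOpen O) {x : Fin l → ℝ} (hxL : x ∈ L) (hxO : x ∈ O) :
    (affineSpan ℝ ((L : Set (Fin l → ℝ)) ∩ O)).direction = L.direction := by
  apply le_antisymm
  · have h1 : affineSpan ℝ ((L : Set (Fin l → ℝ)) ∩ O) ≤ affineSpan ℝ (L : Set (Fin l → ℝ)) :=
      affineSpan_mono ℝ Set.inter_subset_left
    rw [AffineSubspace.affineSpan_coe] at h1
    exact AffineSubspace.direction_le h1
  · intro v hv
    obtain ⟨ε, hε, hball⟩ := Metric.isOpen_iff.1 hO x hxO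
    set t : ℝ := ε / (2 * (‖v‖ + 1)) with ht
    have htpos : 0 < t := by positivity
    have hp : (t • v) +ᵥ x ∈ (L : Set (Fin l → ℝ)) ∩ O := by
      constructor
      · exact AffineSubspace.vadd_mem_of_mem_direction (Submodule.smul_mem _ _ hv) hxL
      · apply hball
        have hd : dist ((t • v) +ᵥ x) x = ‖t • v‖ := by
          rw [dist_eq_norm]; congr 1; simp [vadd_eq_add]
        rw [Metric.mem_ball, hd, norm_smul, Real.norm_eq_abs, abs_of_pos htpos]
        have hv1 : ‖v‖ < ‖v‖ + 1 := by linarith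
        have : t * ‖v‖ < t * (‖v‖ + 1) := by
          rcases eq_or_lt_of_le (norm_nonneg v) with h | h
          · rw [← h]; simpa using htpos
          · exact (mul_lt_mul_iff_right₀ htpos).2 hv1
        have : t * (‖v‖ + 1) = ε / 2 := by
          rw [ht]; field_simp
        nlinarith [norm_nonneg v]
    have hx' : x ∈ affineSpan ℝ ((L : Set (Fin l → ℝ)) ∩ O) :=
      subset_affineSpan ℝ _ ⟨hxL, hxO⟩
    have hp' : (t • v) +ᵥ x ∈ affineSpan ℝ ((L : Set (Fin l → ℝ)) ∩ O) :=
      subset_affineSpan ℝ _ hp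
    have hvs : ((t • v) +ᵥ x) -ᵥ x ∈ (affineSpan ℝ ((L : Set (Fin l → ℝ)) ∩ O)).direction :=
      AffineSubspace.vsub_mem_direction hp' hx'
    have : ((t • v) +ᵥ x) -ᵥ x = t • v := by simp [vadd_eq_add, vsub_eq_sub]
    rw [this] at hvs
    have := Submodule.smul_mem (affineSpan ℝ ((L : Set (Fin l → ℝ)) ∩ O)).direction t⁻¹ hvs
    rwa [smul_smul, inv_mul_cancel₀ (ne_of_gt htpos), one_smul] at this

lemma setDim_inter_open (L : AffineSubspace ℝ (Fin l → ℝ))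
    {O : Set (Fin l → ℝ)} (hO : IsOpen O) {x : Fin l → ℝ} (hxL : x ∈ L) (hxO : x ∈ O) :
    setDim l ((L : Set (Fin l → ℝ)) ∩ O) = Module.finrank ℝ L.direction := by
  rw [setDim, direction_affineSpan_inter_open L hO hxL hxO]

/-- A zero-dimensional nonempty affine subspace is a single point. -/
lemma eq_of_dim_zero {L : AffineSubspace ℝ (Fin l → ℝ)}
    (h : Module.finrank ℝ L.direction = 0) {x y : Fin l → ℝ}
    (hx : x ∈ L) (hy : y ∈ L) : x = y := by
  have : L.direction = ⊥ := Submodule.finrank_eq_zero.1 h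
  have hv : x -ᵥ y ∈ L.direction := AffineSubspace.vsub_mem_direction hx hy
  rw [this, Submodule.mem_bot] at hv
  rwa [vsub_eq_zero_iff_eq] at hv

lemma setDim_univ : setDim l (Set.univ : Set (Fin l → ℝ)) = l := by
  rw [setDim]
  have : affineSpan ℝ (Set.univ : Set (Fin l → ℝ)) = ⊤ := by
    rw [← AffineSubspace.span_univ]
  rw [this, AffineSubspace.direction_top]
  simp [Module.finrank_fintype_fun_eq_card]

end FaceCount

namespace FaceCount

variable {l : ℕ}

lemma small_mem_open {O : Set (Fin l → ℝ)} (hO : IsOpen O) {x : Fin l → ℝ} (hxO : x ∈ O)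
    (v : Fin l → ℝ) : ∃ t : ℝ, 0 < t ∧ ∀ s : ℝ, |s| ≤ t → (s • v) +ᵥ x ∈ O := by
  obtain ⟨ε, hε, hball⟩ := Metric.isOpen_iff.1 hO x hxO
  refine ⟨ε / (2 * (‖v‖ + 1)), by positivity, fun s hs => ?_⟩
  apply hball
  have hd : dist ((s • v) +ᵥ x) x = ‖s • v‖ := by
    rw [dist_eq_norm]; congr 1; simp [vadd_eq_add]
  rw [Metric.mem_ball, hd, norm_smul, Real.norm_eq_abs]
  have h1 : |s| * ‖v‖ ≤ (ε / (2 * (‖v‖ + 1))) * ‖v‖ :=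
    mul_le_mul_of_nonneg_right hs (norm_nonneg v)
  have h2 : (ε / (2 * (‖v‖ + 1))) * ‖v‖ < ε := by
    rw [div_mul_eq_mul_div, div_lt_iff₀ (by positivity)]
    nlinarith [norm_nonneg v]
  linarith

/-- If the flat `L` is not contained in the hyperplane of `H0`, then from a point of an
open region on the hyperplane we can move to both of its sides, staying in the region. -/
lemma sides_of_mid (L : AffineSubspace ℝ (Fin l → ℝ)) (B' Q : Finset (Set (Fin l → ℝ)))
    (H0 : Set (Fin l → ℝ)) (hex : ∃ y ∈ (L : Set (Fin l → ℝ)), fv H0 y ≠ cv H0)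
    {x : Fin l → ℝ} (hxL : x ∈ (L : Set (Fin l → ℝ))) (hxM : fv H0 x = cv H0)
    (hxR : x ∈ Reg B' Q) :
    (∃ p ∈ (L : Set (Fin l → ℝ)) ∩ Reg B' Q, cv H0 < fv H0 p) ∧
      (∃ q ∈ (L : Set (Fin l → ℝ)) ∩ Reg B' Q, fv H0 q < cv H0) := by
  obtain ⟨y, hyL, hyne⟩ := hex
  set a : ℝ := fv H0 (y -ᵥ x) with ha
  have hane : a ≠ 0 := by
    rw [ha]
    simpa [vsub_eq_sub, map_sub, hxM, sub_ne_zero] using hyne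
  set v : Fin l → ℝ := a⁻¹ • (y -ᵥ x) with hv
  have hvdir : v ∈ L.direction :=
    Submodule.smul_mem _ _ (AffineSubspace.vsub_mem_direction hyL hxL)
  have hfv : fv H0 v = 1 := by
    rw [hv, map_smul, smul_eq_mul, ← ha, inv_mul_cancel₀ hane]
  obtain ⟨t, htpos, ht⟩ := small_mem_open (isOpen_Reg B' Q) hxR v
  have key : ∀ s : ℝ, |s| ≤ t → (s • v) +ᵥ x ∈ (L : Set (Fin l → ℝ)) ∩ Reg B' Q ∧
      fv H0 ((s • v) +ᵥ x) = cv H0 + s := by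
    intro s hs
    refine ⟨⟨AffineSubspace.vadd_mem_of_mem_direction (Submodule.smul_mem _ _ hvdir) hxL,
      ht s hs⟩, ?_⟩
    have : fv H0 ((s • v) +ᵥ x) = s * fv H0 v + fv H0 x := by
      simp [vadd_eq_add, map_add, map_smul, smul_eq_mul]
    rw [this, hfv, hxM]; ring
  constructor
  · obtain ⟨hm, hval⟩ := key t (by rw [abs_of_pos htpos])
    exact ⟨_, hm, by rw [hval]; linarith⟩
  · obtain ⟨hm, hval⟩ := key (-t) (by rw [abs_neg, abs_of_pos htpos])
    exact ⟨_, hm, by rw [hval]; linarith⟩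

/-- IVT: a region in a flat meeting both open sides of a hyperplane meets the hyperplane. -/
lemma mid_of_sides (L : AffineSubspace ℝ (Fin l → ℝ)) (B' Q : Finset (Set (Fin l → ℝ)))
    (H0 : Set (Fin l → ℝ)) {x y : Fin l → ℝ}
    (hx : x ∈ (L : Set (Fin l → ℝ)) ∩ Reg B' Q) (hy : y ∈ (L : Set (Fin l → ℝ)) ∩ Reg B' Q)
    (hxp : cv H0 < fv H0 x) (hyn : fv H0 y < cv H0) :
    ∃ z ∈ (L : Set (Fin l → ℝ)) ∩ Reg B' Q, fv H0 z = cv H0 := by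
  set t : ℝ := (fv H0 x - cv H0) / (fv H0 x - fv H0 y) with ht
  have hden : 0 < fv H0 x - fv H0 y := by linarith
  have ht0 : 0 < t := by apply div_pos <;> linarith
  have ht1 : t < 1 := by rw [ht, div_lt_one hden]; linarith
  refine ⟨t • (y -ᵥ x) +ᵥ x, ⟨?_, ?_⟩, ?_⟩
  · exact L.smul_vsub_vadd_mem t hy.1 hx.1 hx.1
  · have hseg : t • (y -ᵥ x) +ᵥ x = (1 - t) • x + t • y := by
      simp only [vsub_eq_sub, vadd_eq_add, smul_sub, sub_smul, one_smul]
      abel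
    rw [hseg]
    exact convex_Reg B' Q hx.2 hy.2 (by linarith) (le_of_lt ht0) (by ring)
  · have : fv H0 (t • (y -ᵥ x) +ᵥ x) = t * (fv H0 y - fv H0 x) + fv H0 x := by
      simp only [vadd_eq_add, vsub_eq_sub, map_add, map_smul, map_sub, smul_eq_mul]
    rw [this, ht]
    field_simp
    ring

end FaceCount

open Finset

namespace FaceCount

variable {l : ℕ}

lemma side_congr {H : Set (Fin l → ℝ)} {a b : Prop} (h : a ↔ b) : side H a = side H b := by
  by_cases ha : a
  · rw [side, side, if_pos ha, if_pos (h.1 ha)]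
  · rw [side, side, if_neg ha, if_neg (fun hb => ha (h.2 hb))]

lemma side_eq_pos {H : Set (Fin l → ℝ)} {b : Prop} (hb : b) :
    side H b = {x | cv H < fv H x} := by rw [side, if_pos hb]

lemma side_eq_neg {H : Set (Fin l → ℝ)} {b : Prop} (hb : ¬ b) :
    side H b = {x | fv H x < cv H} := by rw [side, if_neg hb]

lemma sum_choose_zero (d : ℕ) : ∑ i ∈ range (d + 1), Nat.choose 0 i = 1 := by
  induction d with
  | zero => simp
  | succ d ih =>
      rw [Finset.sum_range_succ, ih, Nat.choose_eq_zero_of_lt (by omega)]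

lemma sum_choose_succ (m e : ℕ) :
    ∑ i ∈ range (e + 2), (m + 1).choose i
      = ∑ i ∈ range (e + 2), m.choose i + ∑ i ∈ range (e + 1), m.choose i := by
  induction e with
  | zero =>
      simp [Finset.sum_range_succ, Nat.choose_one_right]
      omega
  | succ e ih =>
      rw [Finset.sum_range_succ (n := e + 2), ih,
        Finset.sum_range_succ (f := fun i => m.choose i) (n := e + 2),
        Finset.sum_range_succ (f := fun i => m.choose i) (n := e + 1),
        Nat.choose_succ_succ]
      simp only [Nat.succ_eq_add_one, show e + 1 + 1 = e + 2 from rfl]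
      omega

/-- The number of (nonempty) regions, i.e. realizable full sign vectors, of the
arrangement `B` inside the flat `L`. -/
noncomputable def rcount (L : AffineSubspace ℝ (Fin l → ℝ))
    (B : Finset (Set (Fin l → ℝ))) : ℕ :=
  (B.powerset.filter fun P => ((L : Set (Fin l → ℝ)) ∩ Reg B P).Nonempty).card

theorem rcount_eq (B : Finset (Set (Fin l → ℝ))) :
    ∀ (d : ℕ) (L : AffineSubspace ℝ (Fin l → ℝ)),
    (∀ H ∈ B, IsHyp H) →
    (∀ S ⊆ B,
      (S.card ≤ d → (((L : Set (Fin l → ℝ)) ∩ ⋂₀ ↑S).Nonempty ∧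
        setDim l ((L : Set (Fin l → ℝ)) ∩ ⋂₀ ↑S) = d - S.card)) ∧
      (d < S.card → (L : Set (Fin l → ℝ)) ∩ ⋂₀ ↑S = ∅)) →
    rcount L B = ∑ i ∈ range (d + 1), Nat.choose B.card i := by
  induction B using Finset.strongInduction with
  | _ B IH =>
    intro d L hhyp hdim
    have hEmpty := (hdim ∅ (Finset.empty_subset _)).1 (by simp)
    rw [Finset.coe_empty, Set.sInter_empty, Set.inter_univ] at hEmpty
    obtain ⟨hL0, hLdim⟩ := hEmpty
    rw [Finset.card_empty, Nat.sub_zero] at hLdim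
    rcases B.eq_empty_or_nonempty with rfl | ⟨H0, hH0⟩
    · -- empty arrangement
      rw [rcount, Finset.powerset_empty, Finset.filter_singleton, if_pos]
      · rw [Finset.card_singleton, Finset.card_empty, sum_choose_zero]
      · have : Reg (∅ : Finset (Set (Fin l → ℝ))) ∅ = Set.univ := by simp [Reg]
        rw [this, Set.inter_univ]; exact hL0
    rcases Nat.eq_zero_or_pos d with rfl | hd
    · -- zero-dimensional flat: a single point
      obtain ⟨p, hp⟩ := hL0
      have hdir0 : Module.finrank ℝ L.direction = 0 := by
        rw [← setDim_coe]; exact hLdim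
      have huniq : ∀ z ∈ (L : Set (Fin l → ℝ)), z = p :=
        fun z hz => eq_of_dim_zero hdir0 hz hp
      have hmiss : ∀ H ∈ B, p ∉ H := by
        intro H hB hpH
        have h2 := (hdim {H} (Finset.singleton_subset_iff.2 hB)).2 (by simp)
        rw [Finset.coe_singleton, Set.sInter_singleton] at h2
        exact absurd (Set.mem_inter hp hpH) (h2 ▸ Set.notMem_empty p)
      have hkey : B.powerset.filter
          (fun P => ((L : Set (Fin l → ℝ)) ∩ Reg B P).Nonempty)
          = {B.filter (fun H => cv H < fv H p)} := by
        apply Finset.eq_singleton_iff_unique_mem.2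
        constructor
        · refine Finset.mem_filter.2 ⟨Finset.mem_powerset.2 (Finset.filter_subset _ _),
            ⟨p, hp, mem_Reg.2 ?_⟩⟩
          intro H hB
          by_cases hpos : cv H < fv H p
          · exact (mem_side_pos (Finset.mem_filter.2 ⟨hB, hpos⟩)).2 hpos
          · refine (mem_side_neg (b := H ∈ B.filter fun H => cv H < fv H p)
              (fun hm => hpos (Finset.mem_filter.1 hm).2)).2 ?_
            have hne : fv H p ≠ cv H := fun e => hmiss H hB ((mem_hyp_iff (hhyp H hB) p).2 e)
            exact lt_of_le_of_ne (le_of_not_gt hpos) hne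
        · intro Q hQ
          obtain ⟨hQB, z, hzL, hzR⟩ := Finset.mem_filter.1 hQ
          have hzp : z = p := huniq z hzL
          subst hzp
          ext H
          simp only [Finset.mem_filter]
          constructor
          · intro hHQ
            have hB : H ∈ B := Finset.mem_powerset.1 hQB hHQ
            exact ⟨hB, (mem_side_pos hHQ).1 (mem_Reg.1 hzR H hB)⟩
          · rintro ⟨hB, hpos⟩
            by_contra hHQ
            have := (mem_side_neg hHQ).1 (mem_Reg.1 hzR H hB)
            linarith
      rw [rcount, hkey, Finset.card_singleton]
      simp
    -- positive dimension: induction step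
    obtain ⟨e, rfl⟩ : ∃ e, d = e + 1 := ⟨d - 1, by omega⟩
    set B' := B.erase H0 with hB'
    have hH0B' : H0 ∉ B' := Finset.notMem_erase _ _
    have hBins : insert H0 B' = B := Finset.insert_erase hH0
    have hssub : B' ⊂ B := Finset.erase_ssubset hH0
    have hhyp' : ∀ H ∈ B', IsHyp H := fun H h => hhyp H (Finset.erase_subset _ _ h)
    have hdim' : ∀ S ⊆ B', _ := fun S hS => hdim S (hS.trans (Finset.erase_subset _ _))
    have IH1 := IH B' hssub (e + 1) L hhyp' hdim'
    -- the sliced flat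
    set L' : AffineSubspace ℝ (Fin l → ℝ) := L ⊓ interAff {H0} with hL'
    have hIA : (interAff {H0} : Set (Fin l → ℝ)) = {x | fv H0 x = cv H0} := by
      ext x
      simp [mem_interAff]
    have hL'coe : (L' : Set (Fin l → ℝ))
        = (L : Set (Fin l → ℝ)) ∩ {x | fv H0 x = cv H0} := by
      rw [hL']
      ext x
      simp only [SetLike.mem_coe, AffineSubspace.mem_inf_iff, Set.mem_inter_iff,
        Set.mem_setOf_eq, mem_interAff, Finset.mem_singleton, forall_eq]
    have hMid : {x : Fin l → ℝ | fv H0 x = cv H0} = H0 := by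
      ext x; exact ((mem_hyp_iff (hhyp H0 hH0) x).symm)
    have hdim'' : ∀ S ⊆ B',
        (S.card ≤ e → (((L' : Set (Fin l → ℝ)) ∩ ⋂₀ ↑S).Nonempty ∧
          setDim l ((L' : Set (Fin l → ℝ)) ∩ ⋂₀ ↑S) = e - S.card)) ∧
        (e < S.card → (L' : Set (Fin l → ℝ)) ∩ ⋂₀ ↑S = ∅) := by
      intro S hS
      have hS' : insert H0 S ⊆ B := by
        rw [← hBins]
        exact Finset.insert_subset_insert _ hS
      have hH0S : H0 ∉ S := fun h => hH0B' (hS h)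
      have hcard' : (insert H0 S).card = S.card + 1 := Finset.card_insert_of_notMem hH0S
      have hset : (L' : Set (Fin l → ℝ)) ∩ ⋂₀ ↑S
          = (L : Set (Fin l → ℝ)) ∩ ⋂₀ ↑(insert H0 S) := by
        rw [hL'coe, hMid, Finset.coe_insert, Set.sInter_insert, Set.inter_assoc]
      constructor
      · intro hSe
        have h1 := (hdim _ hS').1 (by omega)
        rw [← hset] at h1
        exact ⟨h1.1, by rw [h1.2]; omega⟩
      · intro h
        have h1 := (hdim _ hS').2 (by omega)
        rw [← hset] at h1
        exact h1
    have IH2 := IH B' hssub e L' hhyp' hdim''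
    -- `L` is not inside `H0`
    have hnot : ∃ y ∈ (L : Set (Fin l → ℝ)), fv H0 y ≠ cv H0 := by
      by_contra hcon
      push_neg at hcon
      have hsub : (L : Set (Fin l → ℝ)) ⊆ H0 := by
        intro y hy; rw [← hMid]; exact hcon y hy
      have h1 := (hdim {H0} (Finset.singleton_subset_iff.2 hH0)).1
        (by rw [Finset.card_singleton]; omega)
      rw [Finset.coe_singleton, Set.sInter_singleton,
        Set.inter_eq_left.2 hsub, hLdim, Finset.card_singleton] at h1
      have := h1.2
      omega
    -- split the count
    have hsplit : rcount L B
        = (B'.powerset.filter fun Q =>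
            ((L : Set (Fin l → ℝ)) ∩ Reg B Q).Nonempty).card
          + (B'.powerset.filter fun Q =>
            ((L : Set (Fin l → ℝ)) ∩ Reg B (insert H0 Q)).Nonempty).card := by
      rw [rcount, ← hBins, Finset.powerset_insert, Finset.filter_union, Finset.filter_image,
        Finset.card_union_of_disjoint, Finset.card_image_of_injOn]
      · intro Q1 h1 Q2 h2 hins
        have h1' : H0 ∉ Q1 := fun h => hH0B'
          (Finset.mem_powerset.1 (Finset.mem_filter.1 (Finset.mem_coe.1 h1)).1 h)
        have h2' : H0 ∉ Q2 := fun h => hH0B'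
          (Finset.mem_powerset.1 (Finset.mem_filter.1 (Finset.mem_coe.1 h2)).1 h)
        ext a
        by_cases ha : a = H0
        · subst ha; simp [h1', h2']
        · constructor
          · intro haQ
            have : a ∈ insert H0 Q2 := hins ▸ Finset.mem_insert_of_mem haQ
            exact (Finset.mem_insert.1 this).resolve_left ha
          · intro haQ
            have : a ∈ insert H0 Q1 := hins.symm ▸ Finset.mem_insert_of_mem haQ
            exact (Finset.mem_insert.1 this).resolve_left ha
      · rw [Finset.disjoint_left]
        intro P hP hP'
        have h1 := Finset.mem_powerset.1 (Finset.mem_filter.1 hP).1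
        obtain ⟨Q, hQ, rfl⟩ := Finset.mem_image.1 hP'
        exact hH0B' (h1 (Finset.mem_insert_self _ _))
    -- identify the two parts
    have hreg1 : ∀ Q ∈ B'.powerset,
        (L : Set (Fin l → ℝ)) ∩ Reg B Q
          = ((L : Set (Fin l → ℝ)) ∩ Reg B' Q) ∩ {x | fv H0 x < cv H0} := by
      intro Q hQ
      have hH0Q : ¬ (H0 ∈ Q) := fun h => hH0B' (Finset.mem_powerset.1 hQ h)
      have : Reg B Q = side H0 (H0 ∈ Q) ∩ Reg B' Q := by
        rw [← hBins, Reg, Finset.set_biInter_insert]; rfl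
      rw [this, side_eq_neg hH0Q]
      ext z; simp only [Set.mem_inter_iff, Set.mem_setOf_eq]; tauto
    have hreg2 : ∀ Q ∈ B'.powerset,
        (L : Set (Fin l → ℝ)) ∩ Reg B (insert H0 Q)
          = ((L : Set (Fin l → ℝ)) ∩ Reg B' Q) ∩ {x | cv H0 < fv H0 x} := by
      intro Q hQ
      have h1 : Reg B (insert H0 Q) = side H0 (H0 ∈ insert H0 Q) ∩ Reg B' (insert H0 Q) := by
        rw [← hBins, Reg, Finset.set_biInter_insert]; rfl
      have h2 : Reg B' (insert H0 Q) = Reg B' Q := by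
        rw [Reg, Reg]
        apply Set.iInter₂_congr
        intro H hH
        have : (H ∈ insert H0 Q) ↔ (H ∈ Q) := by
          constructor
          · intro h
            exact (Finset.mem_insert.1 h).resolve_left (fun e => hH0B' (e ▸ hH))
          · exact Finset.mem_insert_of_mem
        exact side_congr this
      rw [h1, h2, side_eq_pos (Finset.mem_insert_self _ _)]
      ext z; simp only [Set.mem_inter_iff, Set.mem_setOf_eq]; tauto
    -- or/and reformulation
    have hor : ∀ Q ∈ B'.powerset,
        ((((L : Set (Fin l → ℝ)) ∩ Reg B' Q) ∩ {x | cv H0 < fv H0 x}).Nonempty ∨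
         (((L : Set (Fin l → ℝ)) ∩ Reg B' Q) ∩ {x | fv H0 x < cv H0}).Nonempty)
          ↔ ((L : Set (Fin l → ℝ)) ∩ Reg B' Q).Nonempty := by
      intro Q hQ
      constructor
      · rintro (⟨z, hz, _⟩ | ⟨z, hz, _⟩) <;> exact ⟨z, hz⟩
      · rintro ⟨z, hz⟩
        rcases lt_trichotomy (fv H0 z) (cv H0) with hlt | heq | hgt
        · exact Or.inr ⟨z, hz, hlt⟩
        · obtain ⟨⟨p', hp', hpos⟩, -⟩ := sides_of_mid L B' Q H0 hnot hz.1 heq hz.2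
          exact Or.inl ⟨p', hp', hpos⟩
        · exact Or.inl ⟨z, hz, hgt⟩
    have hand : ∀ Q ∈ B'.powerset,
        ((((L : Set (Fin l → ℝ)) ∩ Reg B' Q) ∩ {x | cv H0 < fv H0 x}).Nonempty ∧
         (((L : Set (Fin l → ℝ)) ∩ Reg B' Q) ∩ {x | fv H0 x < cv H0}).Nonempty)
          ↔ ((L' : Set (Fin l → ℝ)) ∩ Reg B' Q).Nonempty := by
      intro Q hQ
      constructor
      · rintro ⟨⟨zp, hzp, hp⟩, ⟨zn, hzn, hn⟩⟩
        obtain ⟨z, hz, hmid⟩ := mid_of_sides L B' Q H0 hzp hzn hp hn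
        exact ⟨z, by rw [hL'coe]; exact ⟨⟨hz.1, hmid⟩, hz.2⟩⟩
      · rintro ⟨z, hz⟩
        rw [hL'coe] at hz
        obtain ⟨⟨hzL, hzM⟩, hzR⟩ := hz
        obtain ⟨⟨p', hp', hpos⟩, ⟨q', hq', hneg⟩⟩ := sides_of_mid L B' Q H0 hnot hzL hzM hzR
        exact ⟨⟨p', hp', hpos⟩, ⟨q', hq', hneg⟩⟩
    -- put it together
    have hcount : rcount L B = rcount L B' + rcount L' B' := by
      rw [hsplit]
      have e1 : (B'.powerset.filter fun Q =>
          ((L : Set (Fin l → ℝ)) ∩ Reg B Q).Nonempty)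
          = B'.powerset.filter (fun Q =>
            (((L : Set (Fin l → ℝ)) ∩ Reg B' Q) ∩ {x | fv H0 x < cv H0}).Nonempty) := by
        apply Finset.filter_congr
        intro Q hQ
        rw [hreg1 Q hQ]
      have e2 : (B'.powerset.filter fun Q =>
          ((L : Set (Fin l → ℝ)) ∩ Reg B (insert H0 Q)).Nonempty)
          = B'.powerset.filter (fun Q =>
            (((L : Set (Fin l → ℝ)) ∩ Reg B' Q) ∩ {x | cv H0 < fv H0 x}).Nonempty) := by
        apply Finset.filter_congr
        intro Q hQ
        rw [hreg2 Q hQ]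
      rw [e1, e2]
      have key := Finset.card_union_add_card_inter
        (B'.powerset.filter (fun Q =>
          (((L : Set (Fin l → ℝ)) ∩ Reg B' Q) ∩ {x | cv H0 < fv H0 x}).Nonempty))
        (B'.powerset.filter (fun Q =>
          (((L : Set (Fin l → ℝ)) ∩ Reg B' Q) ∩ {x | fv H0 x < cv H0}).Nonempty))
      rw [← Finset.filter_or, ← Finset.filter_and] at key
      have eor : B'.powerset.filter (fun Q =>
            (((L : Set (Fin l → ℝ)) ∩ Reg B' Q) ∩ {x | cv H0 < fv H0 x}).Nonempty ∨
            (((L : Set (Fin l → ℝ)) ∩ Reg B' Q) ∩ {x | fv H0 x < cv H0}).Nonempty)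
          = B'.powerset.filter (fun Q =>
            ((L : Set (Fin l → ℝ)) ∩ Reg B' Q).Nonempty) := by
        apply Finset.filter_congr
        intro Q hQ
        exact hor Q hQ
      have eand : B'.powerset.filter (fun Q =>
            (((L : Set (Fin l → ℝ)) ∩ Reg B' Q) ∩ {x | cv H0 < fv H0 x}).Nonempty ∧
            (((L : Set (Fin l → ℝ)) ∩ Reg B' Q) ∩ {x | fv H0 x < cv H0}).Nonempty)
          = B'.powerset.filter (fun Q =>
            ((L' : Set (Fin l → ℝ)) ∩ Reg B' Q).Nonempty) := by
        apply Finset.filter_congr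
        intro Q hQ
        exact hand Q hQ
      rw [eor, eand] at key
      rw [rcount, rcount]
      omega
    rw [hcount, IH1, IH2]
    have hcB : B.card = B'.card + 1 := by
      rw [← hBins, Finset.card_insert_of_notMem hH0B']
    rw [hcB]
    exact (sum_choose_succ B'.card e).symm

end FaceCount

namespace FaceCount

variable {l : ℕ} {A : Finset (Set (Fin l → ℝ))}

noncomputable def Zset (A : Finset (Set (Fin l → ℝ))) (x : Fin l → ℝ) :
    Finset (Set (Fin l → ℝ)) := A.filter (fun H => x ∈ H)

noncomputable def Pset (A : Finset (Set (Fin l → ℝ))) (x : Fin l → ℝ) :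
    Finset (Set (Fin l → ℝ)) := (A \ Zset A x).filter (fun H => cv H < fv H x)

noncomputable def Cface (A : Finset (Set (Fin l → ℝ))) (x : Fin l → ℝ) : Set (Fin l → ℝ) :=
  (interAff (Zset A x) : Set (Fin l → ℝ)) ∩ Reg (A \ Zset A x) (Pset A x)

variable (hA : ∀ H ∈ A, IsHyp H)
include hA

lemma mem_Cface_self (x : Fin l → ℝ) : x ∈ Cface A x := by
  constructor
  · intro H hH
    obtain ⟨hHA, hxH⟩ := Finset.mem_filter.1 hH
    exact (mem_hyp_iff (hA H hHA) x).1 hxH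
  · rw [mem_Reg]
    intro H hH
    have hHA : H ∈ A := (Finset.mem_sdiff.1 hH).1
    have hxH : x ∉ H := fun h =>
      (Finset.mem_sdiff.1 hH).2 (Finset.mem_filter.2 ⟨hHA, h⟩)
    by_cases hpos : cv H < fv H x
    · exact (mem_side_pos (Finset.mem_filter.2 ⟨hH, hpos⟩)).2 hpos
    · refine (mem_side_neg (b := H ∈ Pset A x)
        (fun hm => hpos (Finset.mem_filter.1 hm).2)).2 ?_
      have hne : fv H x ≠ cv H := fun e => hxH ((mem_hyp_iff (hA H hHA) x).2 e)
      exact lt_of_le_of_ne (le_of_not_gt hpos) hne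

lemma Cface_subset_D (x : Fin l → ℝ) :
    Cface A x ⊆ ⋂₀ {H | H ∈ A ∧ x ∈ H} \ ⋃₀ {H | H ∈ A ∧ x ∉ H} := by
  rintro y ⟨hyI, hyR⟩
  constructor
  · rintro H ⟨hHA, hxH⟩
    exact (mem_hyp_iff (hA H hHA) y).2 (hyI H (Finset.mem_filter.2 ⟨hHA, hxH⟩))
  · rintro ⟨H, ⟨hHA, hxH⟩, hyH⟩
    have hH : H ∈ A \ Zset A x := Finset.mem_sdiff.2
      ⟨hHA, fun h => hxH (Finset.mem_filter.1 h).2⟩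
    exact not_mem_of_mem_side (hA H hHA) (mem_Reg.1 hyR H hH) hyH

omit hA in
lemma convex_Cface (x : Fin l → ℝ) : Convex ℝ (Cface A x) :=
  ((interAff (Zset A x)).convex).inter (convex_Reg _ _)

/-- The face of `x` is exactly its sign class. -/
lemma arrFace_eq_Cface (x : Fin l → ℝ) : arrFace l A x = Cface A x := by
  set D := ⋂₀ {H | H ∈ A ∧ x ∈ H} \ ⋃₀ {H | H ∈ A ∧ x ∉ H} with hD
  have hxC : x ∈ Cface A x := mem_Cface_self hA x
  have hCD : Cface A x ⊆ D := Cface_subset_D hA x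
  have hxD : x ∈ D := hCD hxC
  apply le_antisymm
  · -- connected component is inside the sign class
    set U := Reg (A \ Zset A x) (Pset A x) with hU
    set V := ⋃ H ∈ (A \ Zset A x), side H (¬ (H ∈ Pset A x)) with hV
    have hUopen : IsOpen U := isOpen_Reg _ _
    have hVopen : IsOpen V := isOpen_biUnion (fun H _ => isOpen_side H _)
    have hDUV : D ⊆ U ∪ V := by
      intro y hyD
      by_cases hyU : y ∈ U
      · exact Or.inl hyU
      · rw [hU, mem_Reg] at hyU
        push_neg at hyU
        obtain ⟨H, hH, hside⟩ := hyU
        have hHA : H ∈ A := (Finset.mem_sdiff.1 hH).1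
        have hxH : x ∉ H := fun h =>
          (Finset.mem_sdiff.1 hH).2 (Finset.mem_filter.2 ⟨hHA, h⟩)
        have hyH : y ∉ H := fun h => hyD.2 ⟨H, ⟨hHA, hxH⟩, h⟩
        rcases side_cases (hA H hHA) hyH (H ∈ Pset A x) with h | h
        · exact absurd h hside
        · exact Or.inr (Set.mem_biUnion hH h)
    have hUV : ∀ y, y ∈ U → y ∈ V → False := by
      intro y hyU hyV
      obtain ⟨H, hH, hside⟩ := Set.mem_iUnion₂.1 hyV
      exact side_disjoint (mem_Reg.1 hyU H hH) hside
    have hDU : D ∩ U = Cface A x := by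
      apply Set.Subset.antisymm
      · rintro y ⟨hyD, hyU⟩
        refine ⟨?_, hyU⟩
        intro H hH
        obtain ⟨hHA, hxH⟩ := Finset.mem_filter.1 hH
        exact (mem_hyp_iff (hA H hHA) y).1 (hyD.1 H ⟨hHA, hxH⟩)
      · exact fun y hy => ⟨hCD hy, hy.2⟩
    intro y hy
    have hsub : connectedComponentIn D x ⊆ U := by
      by_contra hcon
      have hVne : (connectedComponentIn D x ∩ V).Nonempty := by
        rw [Set.not_subset] at hcon
        obtain ⟨z, hz, hzU⟩ := hcon
        rcases hDUV (connectedComponentIn_subset D x hz) with h | h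
        · exact absurd h hzU
        · exact ⟨z, hz, h⟩
      have hUne : (connectedComponentIn D x ∩ U).Nonempty :=
        ⟨x, mem_connectedComponentIn hxD, hxC.2⟩
      obtain ⟨z, hz, hzU, hzV⟩ := isPreconnected_connectedComponentIn U V hUopen hVopen
        ((connectedComponentIn_subset D x).trans hDUV) hUne hVne
      exact hUV z hzU hzV
    rw [← hDU]
    exact ⟨connectedComponentIn_subset D x hy, hsub hy⟩
  · exact (convex_Cface x).isPreconnected.subset_connectedComponentIn hxC hCD

/-- Membership in a sign class determines the sign data. -/
lemma Zset_eq_of_mem {x y : Fin l → ℝ} (hy : y ∈ Cface A x) : Zset A y = Zset A x := by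
  obtain ⟨hyI, hyR⟩ := hy
  ext H
  simp only [Zset, Finset.mem_filter]
  constructor
  · rintro ⟨hHA, hyH⟩
    refine ⟨hHA, ?_⟩
    by_contra hxH
    have hH : H ∈ A \ Zset A x := Finset.mem_sdiff.2
      ⟨hHA, fun h => hxH (Finset.mem_filter.1 h).2⟩
    exact not_mem_of_mem_side (hA H hHA) (mem_Reg.1 hyR H hH) hyH
  · rintro ⟨hHA, hxH⟩
    exact ⟨hHA, (mem_hyp_iff (hA H hHA) y).2
      (hyI H (Finset.mem_filter.2 ⟨hHA, hxH⟩))⟩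

lemma Pset_eq_of_mem {x y : Fin l → ℝ} (hy : y ∈ Cface A x) : Pset A y = Pset A x := by
  have hZ : Zset A y = Zset A x := Zset_eq_of_mem hA hy
  obtain ⟨hyI, hyR⟩ := hy
  ext H
  simp only [Pset, Finset.mem_filter, hZ]
  constructor
  · rintro ⟨hH, hpos⟩
    refine ⟨hH, ?_⟩
    by_contra hxpos
    have := (mem_side_neg (b := H ∈ Pset A x)
      (fun hm => hxpos (Finset.mem_filter.1 hm).2)).1 (mem_Reg.1 hyR H hH)
    linarith
  · rintro ⟨hH, hpos⟩
    exact ⟨hH, (mem_side_pos (Finset.mem_filter.2 ⟨hH, hpos⟩)).1 (mem_Reg.1 hyR H hH)⟩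

lemma Cface_eq_of_mem {x y : Fin l → ℝ} (hy : y ∈ Cface A x) : Cface A y = Cface A x := by
  rw [Cface, Cface, Zset_eq_of_mem hA hy, Pset_eq_of_mem hA hy]

end FaceCount

open Finset

namespace FaceCount

variable {l : ℕ} {A : Finset (Set (Fin l → ℝ))}

lemma term_eq (n l k j : ℕ) (hk : k ≤ l) (hj : j ≤ k) :
    n.choose (l - j) * (l - j).choose (l - k)
      = n.choose (l - k) * (n - (l - k)).choose (k - j) := by
  by_cases h1 : l - j ≤ n
  · have h := Nat.choose_mul (n := n) (k := l - j) (s := l - k) (by omega)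
    rw [h]
    congr 1
    congr 1
    omega
  · rw [Nat.choose_eq_zero_of_lt (show n < l - j by omega)]
    by_cases h2 : l - k ≤ n
    · rw [Nat.choose_eq_zero_of_lt (show n - (l - k) < k - j by omega)]
      simp
    · rw [Nat.choose_eq_zero_of_lt (show n < l - k by omega)]
      simp

section dim

variable (hA : ∀ H ∈ A, IsHyp H)
variable (hgen : ∀ S : Finset (Set (Fin l → ℝ)), ↑S ⊆ (↑A : Set (Set (Fin l → ℝ))) →
      S.Nonempty →
      (S.card ≤ l → (⋂₀ (↑S : Set (Set (Fin l → ℝ)))).Nonempty ∧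
        setDim l (⋂₀ (↑S : Set (Set (Fin l → ℝ)))) = l - S.card) ∧
      (l < S.card → ⋂₀ (↑S : Set (Set (Fin l → ℝ))) = ∅))
include hA hgen

omit hA in
lemma Zset_card_le (x : Fin l → ℝ) : (Zset A x).card ≤ l := by
  by_contra hlt
  rcases (Zset A x).eq_empty_or_nonempty with he | hne
  · rw [he] at hlt; simp at hlt
  have h := (hgen (Zset A x) (by intro H hH; exact (Finset.mem_filter.1 hH).1) hne).2
    (by omega)
  have hx : x ∈ ⋂₀ (↑(Zset A x) : Set (Set (Fin l → ℝ))) := by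
    intro H hH
    exact (Finset.mem_filter.1 hH).2
  rw [h] at hx
  exact hx

lemma setDim_Cface (x : Fin l → ℝ) :
    setDim l (Cface A x) = l - (Zset A x).card := by
  have hZA : ∀ H ∈ Zset A x, IsHyp H := fun H hH => hA H (Finset.mem_filter.1 hH).1
  have hx := mem_Cface_self hA x
  have h1 : setDim l (Cface A x) = Module.finrank ℝ (interAff (Zset A x)).direction := by
    rw [Cface]
    exact setDim_inter_open _ (isOpen_Reg _ _) hx.1 hx.2
  rw [h1, ← setDim_coe, coe_interAff _ hZA]
  rcases (Zset A x).eq_empty_or_nonempty with he | hne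
  · rw [he]
    simpa using setDim_univ
  · have h := (hgen (Zset A x) (by intro H hH; exact (Finset.mem_filter.1 hH).1) hne).1
      (Zset_card_le hgen x)
    exact h.2

end dim

end FaceCount

open FaceCount

open Finset in
/-- For `n` hyperplanes in absolute general position in `ℝˡ` (any `k` of
them, `1 ≤ k ≤ l`, intersect in an `(l-k)`-dimensional flat, and any more than `l` of them
have empty intersection), the number of `k`-dimensional faces of the induced
stratification is `f_k = ∑_{j=0}^{k} C(n, l-j) · C(l-j, l-k)`. -/
theorem face_count_of_hyperplanes_in_general_position
    (l n : ℕ) (A : Finset (Set (Fin l → ℝ))) (hcard : A.card = n)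
    (hhyp : ∀ H ∈ A, ∃ f : (Fin l → ℝ) →ₗ[ℝ] ℝ, f ≠ 0 ∧ ∃ c : ℝ, H = {x | f x = c})
    (hgen : ∀ S : Finset (Set (Fin l → ℝ)), ↑S ⊆ (↑A : Set (Set (Fin l → ℝ))) →
      S.Nonempty →
      (S.card ≤ l → (⋂₀ (↑S : Set (Set (Fin l → ℝ)))).Nonempty ∧
        setDim l (⋂₀ (↑S : Set (Set (Fin l → ℝ)))) = l - S.card) ∧
      (l < S.card → ⋂₀ (↑S : Set (Set (Fin l → ℝ))) = ∅))
    (k : ℕ) (hk : k ≤ l) :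
    Nat.card {F : Set (Fin l → ℝ) | F ∈ Set.range (arrFace l A) ∧ setDim l F = k} =
      ∑ j ∈ Finset.range (k + 1), Nat.choose n (l - j) * Nat.choose (l - j) (l - k) := by
  classical
  have hA : ∀ H ∈ A, IsHyp H := by
    intro H h
    obtain ⟨f, _, c, hc⟩ := hhyp H h
    exact ⟨f, c, hc⟩
  set W : Finset (Σ _ : Finset (Set (Fin l → ℝ)), Finset (Set (Fin l → ℝ))) :=
    (A.powersetCard (l - k)).sigma (fun Z => ((A \ Z).powerset.filter
      (fun P => ((interAff Z : Set (Fin l → ℝ)) ∩ Reg (A \ Z) P).Nonempty))) with hW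
  -- membership of the sign data of a k-dimensional face
  have hmem : ∀ x : Fin l → ℝ, setDim l (Cface A x) = k →
      (⟨Zset A x, Pset A x⟩ :
        Σ _ : Finset (Set (Fin l → ℝ)), Finset (Set (Fin l → ℝ))) ∈ W := by
    intro x hdim
    have h1 := setDim_Cface hA hgen x
    have h2 := Zset_card_le hgen x
    have hzc : (Zset A x).card = l - k := by omega
    refine Finset.mem_sigma.2 ⟨Finset.mem_powersetCard.2 ⟨Finset.filter_subset _ _, hzc⟩, ?_⟩
    refine Finset.mem_filter.2 ⟨Finset.mem_powerset.2 ?_, ?_⟩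
    · rw [Zset] at hzc ⊢
      exact Finset.filter_subset _ _
    · exact ⟨x, (mem_Cface_self hA x).1, (mem_Cface_self hA x).2⟩
  -- the bijection between faces and realizable sign data
  have hbij : Nat.card {F : Set (Fin l → ℝ) | F ∈ Set.range (arrFace l A) ∧ setDim l F = k}
      = W.card := by
    rw [← Nat.card_eq_finsetCard W]
    have hpickmem : ∀ F : {F : Set (Fin l → ℝ) //
        F ∈ Set.range (arrFace l A) ∧ setDim l F = k},
        (⟨Zset A F.2.1.choose, Pset A F.2.1.choose⟩ :
          Σ _ : Finset (Set (Fin l → ℝ)), Finset (Set (Fin l → ℝ))) ∈ W := by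
      intro F
      apply hmem
      rw [← arrFace_eq_Cface hA, F.2.1.choose_spec]
      exact F.2.2
    apply Nat.card_eq_of_bijective
      (fun F : {F : Set (Fin l → ℝ) // F ∈ Set.range (arrFace l A) ∧ setDim l F = k} =>
        (⟨⟨Zset A F.2.1.choose, Pset A F.2.1.choose⟩, hpickmem F⟩ : {w // w ∈ W}))
    constructor
    · intro F G h
      have hval := congrArg Subtype.val h
      have hZ := congrArg Sigma.fst hval
      have hP := congrArg Sigma.snd hval
      simp only at hZ hP
      have hCf : Cface A F.2.1.choose = Cface A G.2.1.choose := by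
        rw [Cface, Cface, hZ, hP]
      apply Subtype.ext
      rw [← F.2.1.choose_spec, ← G.2.1.choose_spec, arrFace_eq_Cface hA,
        arrFace_eq_Cface hA, hCf]
    · rintro ⟨⟨Z, P⟩, hw⟩
      obtain ⟨hZ, hP⟩ := Finset.mem_sigma.1 hw
      obtain ⟨hZsub, hZcard⟩ := Finset.mem_powersetCard.1 hZ
      obtain ⟨hPsub', hPne⟩ := Finset.mem_filter.1 hP
      have hPsub : P ⊆ A \ Z := Finset.mem_powerset.1 hPsub'
      obtain ⟨y, hyI, hyR⟩ := hPne
      have hZy : Zset A y = Z := by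
        ext H
        simp only [Zset, Finset.mem_filter]
        constructor
        · rintro ⟨hHA, hyH⟩
          by_contra hHZ
          have hHAZ : H ∈ A \ Z := Finset.mem_sdiff.2 ⟨hHA, hHZ⟩
          exact not_mem_of_mem_side (hA H hHA) (mem_Reg.1 hyR H hHAZ) hyH
        · intro hHZ
          refine ⟨hZsub hHZ, ?_⟩
          exact (mem_hyp_iff (hA H (hZsub hHZ)) y).2
            ((mem_interAff.1 (SetLike.mem_coe.1 hyI)) H hHZ)
      have hPy : Pset A y = P := by
        rw [Pset, hZy]
        ext H
        simp only [Finset.mem_filter]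
        constructor
        · rintro ⟨hH, hpos⟩
          by_contra hHP
          have := (mem_side_neg (b := H ∈ P) hHP).1 (mem_Reg.1 hyR H hH)
          linarith
        · intro hHP
          exact ⟨hPsub hHP, (mem_side_pos hHP).1 (mem_Reg.1 hyR H (hPsub hHP))⟩
      have hdimy : setDim l (arrFace l A y) = k := by
        rw [arrFace_eq_Cface hA, setDim_Cface hA hgen, hZy, hZcard]
        omega
      have hself : ∀ z : Fin l → ℝ, z ∈ arrFace l A z := by
        intro z
        rw [arrFace_eq_Cface hA]
        exact mem_Cface_self hA z
      refine ⟨⟨arrFace l A y, ⟨Set.mem_range_self y, hdimy⟩⟩, ?_⟩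
      apply Subtype.ext
      have hspec : arrFace l A ((⟨Set.mem_range_self y, hdimy⟩ :
          arrFace l A y ∈ Set.range (arrFace l A) ∧
            setDim l (arrFace l A y) = k).1.choose) = arrFace l A y :=
        (⟨Set.mem_range_self y, hdimy⟩ :
          arrFace l A y ∈ Set.range (arrFace l A) ∧
            setDim l (arrFace l A y) = k).1.choose_spec
      have hmemF : (⟨Set.mem_range_self y, hdimy⟩ :
          arrFace l A y ∈ Set.range (arrFace l A) ∧
            setDim l (arrFace l A y) = k).1.choose ∈ Cface A y := by
        have h1 := hself ((⟨Set.mem_range_self y, hdimy⟩ :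
          arrFace l A y ∈ Set.range (arrFace l A) ∧
            setDim l (arrFace l A y) = k).1.choose)
        rw [hspec] at h1
        exact (Set.ext_iff.1 (arrFace_eq_Cface hA y) _).1 h1
      show (⟨Zset A _, Pset A _⟩ :
        Σ _ : Finset (Set (Fin l → ℝ)), Finset (Set (Fin l → ℝ))) = ⟨Z, P⟩
      rw [Zset_eq_of_mem hA hmemF, Pset_eq_of_mem hA hmemF, hZy, hPy]
  -- counting the realizable sign data
  have hWcard : W.card = Nat.choose n (l - k) *
      ∑ i ∈ Finset.range (k + 1), Nat.choose (n - (l - k)) i := by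
    rw [hW, Finset.card_sigma]
    rw [Finset.sum_congr rfl (g := fun _ => ∑ i ∈ Finset.range (k + 1),
        Nat.choose (n - (l - k)) i) ?_]
    · rw [Finset.sum_const, smul_eq_mul, Finset.card_powersetCard, hcard]
    · intro Z hZ
      obtain ⟨hZsub, hZcard⟩ := Finset.mem_powersetCard.1 hZ
      have hAZ : (A \ Z).card = n - (l - k) := by
        rw [Finset.card_sdiff_of_subset hZsub, hcard, hZcard]
      rw [← hAZ]
      refine rcount_eq (A \ Z) k (interAff Z)
        (fun H hH => hA H (Finset.mem_sdiff.1 hH).1) ?_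
      intro S hS
      have hdisj : Disjoint Z S := by
        rw [Finset.disjoint_left]
        intro a haZ haS
        exact (Finset.mem_sdiff.1 (hS haS)).2 haZ
      have hcardU : (Z ∪ S).card = (l - k) + S.card := by
        rw [Finset.card_union_of_disjoint hdisj, hZcard]
      have hUsub : ↑(Z ∪ S) ⊆ (↑A : Set (Set (Fin l → ℝ))) := by
        rw [Finset.coe_union]
        apply Set.union_subset
        · exact Finset.coe_subset.2 hZsub
        · exact Finset.coe_subset.2 (hS.trans (Finset.sdiff_subset))
      have hset : (interAff Z : Set (Fin l → ℝ)) ∩ ⋂₀ ↑S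
          = ⋂₀ (↑(Z ∪ S) : Set (Set (Fin l → ℝ))) := by
        rw [coe_interAff Z (fun H hH => hA H (hZsub hH)), Finset.coe_union,
          Set.sInter_union]
      constructor
      · intro hSk
        rcases (Z ∪ S).eq_empty_or_nonempty with hU | hU
        · have hZe : Z = ∅ := Finset.union_eq_empty.1 hU |>.1
          have hSe : S = ∅ := Finset.union_eq_empty.1 hU |>.2
          subst hZe hSe
          have huniv : (interAff (∅ : Finset (Set (Fin l → ℝ))) : Set (Fin l → ℝ))
              ∩ ⋂₀ ↑(∅ : Finset (Set (Fin l → ℝ))) = Set.univ := by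
            rw [coe_interAff _ (by simp), Finset.coe_empty, Set.sInter_empty,
              Set.inter_univ]
          rw [huniv]
          refine ⟨Set.univ_nonempty, ?_⟩
          rw [setDim_univ]
          simp only [Finset.card_empty] at hZcard ⊢
          omega
        · have h := (hgen (Z ∪ S) hUsub hU).1 (by omega)
          rw [← hset] at h
          exact ⟨h.1, by rw [h.2, hcardU]; omega⟩
      · intro hSk
        have hU : (Z ∪ S).Nonempty := by
          have : S.Nonempty := Finset.card_pos.1 (by omega)
          exact this.mono Finset.subset_union_right
        have h := (hgen (Z ∪ S) hUsub hU).2 (by omega)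
        rw [← hset] at h
        exact h
  -- final binomial arithmetic
  rw [hbij, hWcard]
  have hsum : ∑ j ∈ Finset.range (k + 1), Nat.choose n (l - j) * Nat.choose (l - j) (l - k)
      = Nat.choose n (l - k) * ∑ i ∈ Finset.range (k + 1), Nat.choose (n - (l - k)) i := by
    rw [Finset.sum_congr rfl (fun j hj => term_eq n l k j hk
      (Nat.lt_succ_iff.1 (Finset.mem_range.1 hj))), ← Finset.mul_sum]
    congr 1
    have hr := Finset.sum_range_reflect (fun i => Nat.choose (n - (l - k)) i) (k + 1)
    simpa using hr
  rw [hsum]
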